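/- arXiv:2302.13658 — 2 statements merged into one kernel-verified Lean document; each statement's English description precedes it below -/
import Mathlib

section
/- Let L : ℝ^p → ℝ be convex and differentiable, η > 0, and suppose β̂ minimizes β ↦ L(β) + η‖β‖₁ over ℝ^p. If ‖∇L(β₀)‖_∞ ≤ η/2 for some β₀ ∈ ℝ^p, then for any index set S ⊆ {1,…,p}, the error w = β̂ − β₀ lies in the cone ‖w_{S^c}‖₁ ≤ 3‖w_S‖₁ + 4‖(β₀)_{S^c}‖₁. -/
open Finset

theorem lasso_cone_condition {p : ℕ} (L : (Fin p → ℝ) → ℝ)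
    (hconv : ConvexOn ℝ Set.univ L) (hdiff : Differentiable ℝ L)
    (η : ℝ) (hη : 0 < η)
    (βhat β₀ : Fin p → ℝ)
    (hmin : ∀ β : Fin p → ℝ,
      L βhat + η * ∑ i, |βhat i| ≤ L β + η * ∑ i, |β i|)
    (hgrad : ∀ i, |fderiv ℝ L β₀ (Pi.single i 1)| ≤ η / 2)
    (S : Finset (Fin p)) :
    ∑ i ∈ Sᶜ, |βhat i - β₀ i| ≤
      3 * ∑ i ∈ S, |βhat i - β₀ i| + 4 * ∑ i ∈ Sᶜ, |β₀ i| := by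
  set w : Fin p → ℝ := βhat - β₀ with hw
  set f := fderiv ℝ L β₀ with hf
  -- gradient lower bound from convexity
  have hg : ConvexOn ℝ Set.univ (L ∘ (AffineMap.lineMap β₀ βhat : ℝ →ᵃ[ℝ] (Fin p → ℝ))) := by
    have := hconv.comp_affineMap (AffineMap.lineMap β₀ βhat : ℝ →ᵃ[ℝ] (Fin p → ℝ))
    simpa using this
  have hderiv : HasDerivAt (L ∘ (AffineMap.lineMap β₀ βhat : ℝ →ᵃ[ℝ] (Fin p → ℝ)))
      (f w) 0 := by
    have h1 : HasDerivAt (fun t : ℝ => (AffineMap.lineMap β₀ βhat : ℝ →ᵃ[ℝ] (Fin p → ℝ)) t)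
        w 0 := AffineMap.hasDerivAt_lineMap
    have h2 : HasFDerivAt L f ((AffineMap.lineMap β₀ βhat : ℝ →ᵃ[ℝ] (Fin p → ℝ)) 0) := by
      simpa using (hdiff β₀).hasFDerivAt
    exact h2.comp_hasDerivAt 0 h1
  have hslope : f w ≤ L βhat - L β₀ := by
    have := hg.le_slope_of_hasDerivAt (Set.mem_univ (0:ℝ)) (Set.mem_univ (1:ℝ))
      one_pos hderiv
    simpa [slope, Function.comp] using this
  -- |f w| ≤ (η/2) * ∑ |w i|
  have hfw : |f w| ≤ η / 2 * ∑ i, |w i| := by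
    have hwsum : w = ∑ i, w i • (Pi.single i (1:ℝ) : Fin p → ℝ) := by
      ext j
      classical
      simp [Finset.sum_apply, Pi.single_apply, mul_comm]
    have hfe : f w = ∑ i, w i * f (Pi.single i 1) := by
      conv_lhs => rw [hwsum]
      simp [map_sum, map_smul, smul_eq_mul]
    calc |f w| = |∑ i, w i * f (Pi.single i 1)| := by rw [hfe]
      _ ≤ ∑ i, |w i * f (Pi.single i 1)| := Finset.abs_sum_le_sum_abs _ _
      _ ≤ ∑ i, |w i| * (η / 2) := by
          refine Finset.sum_le_sum fun i _ => ?_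
          rw [abs_mul]
          exact mul_le_mul_of_nonneg_left (hgrad i) (abs_nonneg _)
      _ = η / 2 * ∑ i, |w i| := by rw [← Finset.sum_mul]; ring
  have key : η * ∑ i, |βhat i| ≤ η * ∑ i, |β₀ i| + η / 2 * ∑ i, |w i| := by
    have h1 := hmin β₀
    have h2 : -(η / 2 * ∑ i, |w i|) ≤ f w := by
      have := neg_abs_le (f w); linarith [hfw]
    linarith [hslope]
  -- split sums
  have hsplit : ∀ v : Fin p → ℝ, ∑ i, |v i| = ∑ i ∈ S, |v i| + ∑ i ∈ Sᶜ, |v i| :=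
    fun v => (Finset.sum_add_sum_compl S _).symm
  have h3 : ∑ i ∈ S, |β₀ i| - ∑ i ∈ S, |w i| ≤ ∑ i ∈ S, |βhat i| := by
    rw [← Finset.sum_sub_distrib]
    refine Finset.sum_le_sum fun i _ => ?_
    have := abs_sub_abs_le_abs_sub (β₀ i) (βhat i)
    have h : |β₀ i - βhat i| = |w i| := by rw [hw]; simp [abs_sub_comm]
    linarith
  have h4 : ∑ i ∈ Sᶜ, |w i| - ∑ i ∈ Sᶜ, |β₀ i| ≤ ∑ i ∈ Sᶜ, |βhat i| := by
    rw [← Finset.sum_sub_distrib]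
    refine Finset.sum_le_sum fun i _ => ?_
    have := abs_sub_abs_le_abs_sub (w i) (β₀ i)
    have h : w i - β₀ i = βhat i - 2 * β₀ i := by rw [hw]; simp; ring
    have h2 : |w i| - |β₀ i| ≤ |βhat i| := by
      have := abs_sub_abs_le_abs_sub (βhat i) (β₀ i)
      have hwi : |w i| = |βhat i - β₀ i| := by rw [hw]; simp
      have := abs_sub (βhat i) (β₀ i)
      rw [hwi]
      calc |βhat i - β₀ i| - |β₀ i| ≤ (|βhat i| + |β₀ i|) - |β₀ i| := by
            linarith [abs_sub (βhat i) (β₀ i)]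
        _ = |βhat i| := by ring
    linarith
  have hwS : ∀ i, |w i| = |βhat i - β₀ i| := fun i => by rw [hw]; simp
  have e1 : ∑ i ∈ S, |w i| = ∑ i ∈ S, |βhat i - β₀ i| :=
    Finset.sum_congr rfl fun i _ => hwS i
  have e2 : ∑ i ∈ Sᶜ, |w i| = ∑ i ∈ Sᶜ, |βhat i - β₀ i| :=
    Finset.sum_congr rfl fun i _ => hwS i
  rw [hsplit βhat, hsplit β₀, hsplit w, e1, e2] at key
  rw [e2] at h4
  nlinarith [key, h3, h4, hη]
end

section
/- Let Îβ, Iβ ∈ ℝ^p, δ ∈ [0,1), s ≥ 0, and h > 0. Suppose (i) max_i |Îβ_i − Iβ_i| ≤ h/2, (ii) Σ_{i=1}^p |Iβ_i|^δ ≤ s (with 0⁰ := 0), and (iii) the thresholded estimator is Ĩβ_i = s(Îβ_i)·1{|Îβ_i| ≥ h} where the shrinkage function satisfies |s(x) − x| ≤ h for all x. Then Σ_{i=1}^p |Ĩβ_i − Iβ_i| ≤ 5·s·h^{1−δ}. -/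
open Finset

theorem thresholded_estimator_l1_bound {p : ℕ}
    (Ibhat Ib : Fin p → ℝ) (δ s h : ℝ)
    (hδ0 : 0 ≤ δ) (hδ1 : δ < 1) (hs : 0 ≤ s) (hh : 0 < h)
    (shrink : ℝ → ℝ) (hshrink : ∀ x, |shrink x - x| ≤ h)
    (hmax : ∀ i, |Ibhat i - Ib i| ≤ h / 2)
    (hsparse : ∑ i, (if Ib i = 0 then (0 : ℝ) else |Ib i| ^ δ) ≤ s)
    (Ibtilde : Fin p → ℝ)
    (hdef : ∀ i, Ibtilde i = if h ≤ |Ibhat i| then shrink (Ibhat i) else 0) :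
    ∑ i, |Ibtilde i - Ib i| ≤ 5 * s * h ^ (1 - δ) := by
  have h1δ : (0:ℝ) ≤ 1 - δ := by linarith
  have hhp : (0:ℝ) ≤ h := hh.le
  have key : ∀ i, |Ibtilde i - Ib i| ≤
      5 * h ^ (1 - δ) * (if Ib i = 0 then (0 : ℝ) else |Ib i| ^ δ) := by
    intro i
    by_cases hz : Ib i = 0
    · -- Ib i = 0, so |Ibhat i| ≤ h/2 < h, threshold off
      have hb : |Ibhat i| ≤ h / 2 := by
        have := hmax i; rw [hz] at this; simpa using this
      have : ¬ h ≤ |Ibhat i| := by linarith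
      rw [hdef i, if_neg this, hz, if_pos rfl]
      simp
    · rw [if_neg hz]
      have hIbpos : 0 < |Ib i| := abs_pos.mpr hz
      by_cases ht : h ≤ |Ibhat i|
      · -- threshold on
        rw [hdef i, if_pos ht]
        have h1 : |shrink (Ibhat i) - Ib i| ≤ 3 * h / 2 := by
          have := hshrink (Ibhat i)
          have := hmax i
          calc |shrink (Ibhat i) - Ib i|
              ≤ |shrink (Ibhat i) - Ibhat i| + |Ibhat i - Ib i| := by
                have := abs_sub_le (shrink (Ibhat i)) (Ibhat i) (Ib i); linarith
            _ ≤ 3 * h / 2 := by linarith [hshrink (Ibhat i), hmax i]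
        have hlb : h / 2 ≤ |Ib i| := by
          have h2 := hmax i
          have := abs_sub_abs_le_abs_sub (Ibhat i) (Ib i)
          have habs : |Ibhat i| - |Ib i| ≤ |Ibhat i - Ib i| := this
          linarith
        have hr1 : (h / 2) ^ δ ≤ |Ib i| ^ δ :=
          Real.rpow_le_rpow (by linarith) hlb hδ0
        have hr2 : (1:ℝ)/2 ≤ ((1:ℝ)/2) ^ δ := by
          have := Real.rpow_le_rpow_of_exponent_ge (x := (1:ℝ)/2) (by norm_num)
            (by norm_num) hδ1.le
          simpa using this
        have heq : h ^ (1 - δ) * (h / 2) ^ δ = h * (1/2) ^ δ := by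
          rw [show h / 2 = h * (1/2) by ring,
            Real.mul_rpow hhp (by norm_num), ← mul_assoc,
            ← Real.rpow_add hh]
          norm_num
        have hfinal : 3 * h / 2 ≤ 5 * h ^ (1 - δ) * |Ib i| ^ δ := by
          have hmono : h ^ (1 - δ) * (h / 2) ^ δ ≤ h ^ (1 - δ) * |Ib i| ^ δ :=
            mul_le_mul_of_nonneg_left hr1 (Real.rpow_nonneg hhp _)
          have : h * (1/2) ≤ h * (1/2) ^ δ :=
            mul_le_mul_of_nonneg_left hr2 hhp
          nlinarith [Real.rpow_nonneg hhp (1 - δ), Real.rpow_nonneg (abs_nonneg (Ib i)) δ]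
        linarith
      · -- threshold off
        rw [hdef i, if_neg ht]
        have hub : |Ib i| ≤ 3 * h / 2 := by
          have h2 := hmax i
          have := abs_sub_abs_le_abs_sub (Ib i) (Ibhat i)
          have habs : |Ib i| - |Ibhat i| ≤ |Ib i - Ibhat i| := this
          rw [abs_sub_comm] at habs
          push_neg at ht
          linarith
        have hsplit : |Ib i| = |Ib i| ^ (1 - δ) * |Ib i| ^ δ := by
          rw [← Real.rpow_add hIbpos]; norm_num
        have hr1 : |Ib i| ^ (1 - δ) ≤ (3 * h / 2) ^ (1 - δ) :=
          Real.rpow_le_rpow (abs_nonneg _) hub h1δ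
        have hr2 : (3 * h / 2) ^ (1 - δ) ≤ 5 * h ^ (1 - δ) := by
          have heq : (3 * h / 2) ^ (1 - δ) = (3/2 : ℝ) ^ (1 - δ) * h ^ (1 - δ) := by
            rw [show 3 * h / 2 = (3/2 : ℝ) * h by ring,
              Real.mul_rpow (by norm_num) hhp]
          have hle : (3/2 : ℝ) ^ (1 - δ) ≤ (3/2 : ℝ) ^ (1:ℝ) :=
            Real.rpow_le_rpow_of_exponent_le (by norm_num) (by linarith)
          rw [heq]
          have : ((3:ℝ)/2) ^ (1:ℝ) = 3/2 := Real.rpow_one _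
          nlinarith [Real.rpow_nonneg hhp (1 - δ)]
        calc |0 - Ib i| = |Ib i| := by rw [zero_sub, abs_neg]
          _ = |Ib i| ^ (1 - δ) * |Ib i| ^ δ := hsplit
          _ ≤ (3 * h / 2) ^ (1 - δ) * |Ib i| ^ δ :=
              mul_le_mul_of_nonneg_right hr1 (Real.rpow_nonneg (abs_nonneg _) _)
          _ ≤ 5 * h ^ (1 - δ) * |Ib i| ^ δ :=
              mul_le_mul_of_nonneg_right hr2 (Real.rpow_nonneg (abs_nonneg _) _)
  calc ∑ i, |Ibtilde i - Ib i|
      ≤ ∑ i, 5 * h ^ (1 - δ) * (if Ib i = 0 then (0:ℝ) else |Ib i| ^ δ) :=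
        Finset.sum_le_sum fun i _ => key i
    _ = 5 * h ^ (1 - δ) * ∑ i, (if Ib i = 0 then (0:ℝ) else |Ib i| ^ δ) := by
        rw [Finset.mul_sum]
    _ ≤ 5 * h ^ (1 - δ) * s := by
        apply mul_le_mul_of_nonneg_left hsparse
        positivity
    _ = 5 * s * h ^ (1 - δ) := by ring
end
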